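/- Let 0 ≤ α < π/2, let 0 ≤ β, γ ≤ π/2 with α > 0, 0 < α + β < π and 0 < 2α + γ < π, and suppose cos(α + β) = (3/4)·cos(γ) and cos(2α + γ) = (2/3)·cos(β). Then sin(β)·sin(γ) < sin(α + β)·sin(2α + γ). -/
import Mathlib

set_option maxHeartbeats 1000000


open Real

theorem stmt14 (α β γ : ℝ) (hα0 : 0 ≤ α) (hα1 : α < π / 2)
    (hβ0 : 0 ≤ β) (hβ1 : β ≤ π / 2) (hγ0 : 0 ≤ γ) (hγ1 : γ ≤ π / 2)
    (hα : 0 < α) (h1 : 0 < α + β) (h2 : α + β < π) (h3 : 0 < 2 * α + γ) (h4 : 2 * α + γ < π)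
    (e1 : cos (α + β) = 3 / 4 * cos γ) (e2 : cos (2 * α + γ) = 2 / 3 * cos β) :
    sin β * sin γ < sin (α + β) * sin (2 * α + γ) := by
  have hπ := Real.pi_pos
  have s1 : 0 < sin (α + β) := Real.sin_pos_of_pos_of_lt_pi h1 h2
  have s2 : 0 < sin (2 * α + γ) := Real.sin_pos_of_pos_of_lt_pi h3 h4
  have sb : 0 ≤ sin β := Real.sin_nonneg_of_nonneg_of_le_pi hβ0 (by linarith)
  have sg : 0 ≤ sin γ := Real.sin_nonneg_of_nonneg_of_le_pi hγ0 (by linarith)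
  have cb : 0 ≤ cos β := Real.cos_nonneg_of_mem_Icc ⟨by linarith, hβ1⟩
  have cg : 0 ≤ cos γ := Real.cos_nonneg_of_mem_Icc ⟨by linarith, hγ1⟩
  have q1 : sin (α + β) ^ 2 = 1 - (3 / 4 * cos γ) ^ 2 := by rw [Real.sin_sq, e1]
  have q2 : sin (2 * α + γ) ^ 2 = 1 - (2 / 3 * cos β) ^ 2 := by rw [Real.sin_sq, e2]
  have qb : sin β ^ 2 = 1 - cos β ^ 2 := Real.sin_sq β
  have qg : sin γ ^ 2 = 1 - cos γ ^ 2 := Real.sin_sq γ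
  have k1 : sin γ ≤ sin (α + β) := by nlinarith
  have k2 : sin β ≤ sin (2 * α + γ) := by nlinarith
  rcases lt_or_eq_of_le cg with hcg | hcg
  · have k1' : sin γ < sin (α + β) := by nlinarith
    nlinarith
  · have hcb : 0 < cos β := by
      rcases lt_or_eq_of_le cb with h | h
      · exact h
      · exfalso
        have sb1 : sin β = 1 := by nlinarith [sq_nonneg (sin β - 1), sq_nonneg (sin β + 1)]
        have sa : 0 < sin α := Real.sin_pos_of_pos_of_lt_pi hα (by linarith)
        have := Real.cos_add α β
        rw [e1, ← hcg, ← h, sb1] at this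
        linarith
    have k2' : sin β < sin (2 * α + γ) := by nlinarith
    have sg1 : sin γ = 1 := by nlinarith [sq_nonneg (sin γ - 1), sq_nonneg (sin γ + 1)]
    nlinarith
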